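/- (Eckart–Young theorem for the t-SVDM.) Let M = c • W with c ∈ ℂ, c ≠ 0 and W ∈ Matrix.unitaryGroup (Fin n) ℂ, let A = U ⋆_M S ⋆_M Vᴴ be a t-SVDM of an m×p×n tensor A, and let k ≤ min(m,p). Let A_k be the t-rank-k truncation. Then ‖A − A_k‖_F² = ∑_{i > k} ∑_{j=1}^{n} |(S j) i i|², and for every m×k×n tensor X and every k×p×n tensor Y, ‖A − A_k‖_F ≤ ‖A − X ⋆_M Y‖_F. -/

import Mathlib

open scoped BigOperators ComplexConjugate Matrix

noncomputable section

variable {R : Type*}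

/-- Mode-3 product of a third-order tensor (encoded by its frontal slices)
with a transform matrix: `(A ×₃ M) i = ∑ j, (M i j) • (A j)`. -/
def mode3 [RCLike R] {ι α β : Type*} [Fintype ι]
    (A : ι → Matrix α β R) (M : Matrix ι ι R) : ι → Matrix α β R :=
  fun i => ∑ j, M i j • A j

/-- Frobenius (entrywise ℓ²) norm of a matrix. -/
def fnorm [RCLike R] {α β : Type*} [Fintype α] [Fintype β] (A : Matrix α β R) : ℝ :=
  Real.sqrt (∑ a, ∑ b, ‖A a b‖ ^ 2)

/-- Frobenius norm of a tensor: `‖A‖² = ∑ i, ‖A i‖²`. -/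
def tnorm [RCLike R] {ι α β : Type*} [Fintype ι] [Fintype α] [Fintype β]
    (A : ι → Matrix α β R) : ℝ :=
  Real.sqrt (∑ i, fnorm (A i) ^ 2)

/-- The ⋆_M product: facewise product in the transform domain, then inverse transform. -/
def tprodM [RCLike R] {ι m p q : Type*} [Fintype ι] [DecidableEq ι] [Fintype p]
    (M : Matrix ι ι R) (A : ι → Matrix m p R) (B : ι → Matrix p q R) :
    ι → Matrix m q R :=
  mode3 (fun i => mode3 A M i * mode3 B M i) M⁻¹

/-- Conjugate transpose of a tensor under ⋆_M. -/
def tconj [RCLike R] {ι m p : Type*} [Fintype ι] [DecidableEq ι]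
    (M : Matrix ι ι R) (A : ι → Matrix m p R) : ι → Matrix p m R :=
  mode3 (fun i => (mode3 A M i)ᴴ) M⁻¹

/-- The identity tensor under ⋆_M. -/
def tId [RCLike R] (m : Type*) [DecidableEq m] {ι : Type*} [Fintype ι] [DecidableEq ι]
    (M : Matrix ι ι R) : ι → Matrix m m R :=
  mode3 (fun _ => (1 : Matrix m m R)) M⁻¹

/-- A square tensor `Q` is ⋆_M-unitary if `Qᴴ ⋆_M Q = Q ⋆_M Qᴴ = I`. -/
def tUnitary [RCLike R] {ι m : Type*} [Fintype ι] [DecidableEq ι] [Fintype m] [DecidableEq m]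
    (M : Matrix ι ι R) (Q : ι → Matrix m m R) : Prop :=
  tprodM M (tconj M Q) Q = tId m M ∧ tprodM M Q (tconj M Q) = tId m M

/-- A t-SVDM of `A`: a factorization `A = U ⋆_M S ⋆_M Vᴴ` with `U`, `V` ⋆_M-unitary and every
transform-domain slice `Ŝ i` diagonal with real, nonnegative, nonincreasing diagonal entries. -/
def IsTSVDM [RCLike R] {m p n : ℕ} (M : Matrix (Fin n) (Fin n) R)
    (A : Fin n → Matrix (Fin m) (Fin p) R)
    (U : Fin n → Matrix (Fin m) (Fin m) R)
    (S : Fin n → Matrix (Fin m) (Fin p) R)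
    (V : Fin n → Matrix (Fin p) (Fin p) R) : Prop :=
  A = tprodM M (tprodM M U S) (tconj M V) ∧
  tUnitary M U ∧ tUnitary M V ∧
  (∀ (i : Fin n) (a : Fin m) (b : Fin p), (a : ℕ) ≠ (b : ℕ) → mode3 S M i a b = 0) ∧
  (∀ (i : Fin n) (a : Fin m) (b : Fin p), (a : ℕ) = (b : ℕ) →
      ∃ r : ℝ, 0 ≤ r ∧ mode3 S M i a b = (r : R)) ∧
  (∀ (i : Fin n) (a a' : Fin m) (b b' : Fin p), (a : ℕ) = (b : ℕ) → (a' : ℕ) = (b' : ℕ) →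
      (a : ℕ) ≤ (a' : ℕ) →
      RCLike.re (mode3 S M i a' b') ≤ RCLike.re (mode3 S M i a b))

/-- Transform-domain slice of a truncation:
(first k columns of Û) * (leading k×k block of Ŝ) * (first k columns of V̂)ᴴ. -/
def truncSlice [RCLike R] {m p : ℕ} (k : ℕ) (Uh : Matrix (Fin m) (Fin m) R)
    (Sh : Matrix (Fin m) (Fin p) R) (Vh : Matrix (Fin p) (Fin p) R) :
    Matrix (Fin m) (Fin p) R :=
  Matrix.of fun a b =>
    ∑ j : Fin m, ∑ l : Fin p,
      if (j : ℕ) < k ∧ (l : ℕ) < k then Uh a j * Sh j l * star (Vh b l) else 0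

/-- The multi-rank-ρ truncation of a t-SVDM (use `ρ = fun _ => k` for the t-rank-k truncation). -/
def truncTensor [RCLike R] {m p n : ℕ} (M : Matrix (Fin n) (Fin n) R)
    (U : Fin n → Matrix (Fin m) (Fin m) R) (S : Fin n → Matrix (Fin m) (Fin p) R)
    (V : Fin n → Matrix (Fin p) (Fin p) R) (ρ : Fin n → ℕ) :
    Fin n → Matrix (Fin m) (Fin p) R :=
  mode3 (fun i => truncSlice (ρ i) (mode3 U M i) (mode3 S M i) (mode3 V M i)) M⁻¹

/-- The permuted tensor `Aᴾ`: `(Aᴾ c) i j = (A i) c j`. -/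
def tperm [RCLike R] {m p n : ℕ} (A : Fin n → Matrix (Fin m) (Fin p) R) :
    Fin m → Matrix (Fin n) (Fin p) R :=
  fun c => Matrix.of fun i j => A i c j

/-! ### Auxiliary machinery -/

section Aux

/-- Squared Frobenius norm (no square root), for convenience. -/
def fro {α β : Type*} [Fintype α] [Fintype β] (X : Matrix α β ℂ) : ℝ :=
  ∑ a, ∑ b, ‖X a b‖ ^ 2

lemma fro_nonneg {α β : Type*} [Fintype α] [Fintype β] (X : Matrix α β ℂ) : 0 ≤ fro X :=
  Finset.sum_nonneg fun _ _ => Finset.sum_nonneg fun _ _ => by positivity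

lemma fnorm_sq {α β : Type*} [Fintype α] [Fintype β] (X : Matrix α β ℂ) :
    fnorm X ^ 2 = fro X :=
  Real.sq_sqrt (fro_nonneg X)

lemma tnorm_sq {ι α β : Type*} [Fintype ι] [Fintype α] [Fintype β]
    (Z : ι → Matrix α β ℂ) : tnorm Z ^ 2 = ∑ i, fro (Z i) := by
  unfold tnorm
  rw [Real.sq_sqrt (Finset.sum_nonneg fun i _ => sq_nonneg _)]
  exact Finset.sum_congr rfl fun i _ => fnorm_sq (Z i)

lemma tnorm_eq_sqrt {ι α β : Type*} [Fintype ι] [Fintype α] [Fintype β]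
    (Z : ι → Matrix α β ℂ) : tnorm Z = Real.sqrt (∑ i, fro (Z i)) := by
  unfold tnorm
  congr 1
  exact Finset.sum_congr rfl fun i _ => fnorm_sq (Z i)

lemma trace_fro {α β : Type*} [Fintype α] [Fintype β] (X : Matrix α β ℂ) :
    Matrix.trace (Xᴴ * X) = (fro X : ℂ) := by
  simp only [Matrix.trace, Matrix.diag, Matrix.mul_apply, Matrix.conjTranspose_apply, fro]
  rw [Finset.sum_comm]
  push_cast
  refine Finset.sum_congr rfl fun a _ => Finset.sum_congr rfl fun b _ => ?_
  exact_mod_cast RCLike.conj_mul (X a b)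

lemma fro_unitary_left {α β γ : Type*} [Fintype α] [Fintype β] [Fintype γ] [DecidableEq β]
    (Q : Matrix α β ℂ) (hQ : Qᴴ * Q = 1) (X : Matrix β γ ℂ) : fro (Q * X) = fro X := by
  have := trace_fro (Q * X)
  rw [Matrix.conjTranspose_mul, show Xᴴ * Qᴴ * (Q * X) = Xᴴ * (Qᴴ * Q) * X by
    simp [Matrix.mul_assoc], hQ, Matrix.mul_one, trace_fro] at this
  exact_mod_cast this.symm

lemma fro_unitary_right {α β : Type*} [Fintype α] [Fintype β] [DecidableEq β]
    (R : Matrix β β ℂ) (hR : R * Rᴴ = 1) (X : Matrix α β ℂ) : fro (X * Rᴴ) = fro X := by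
  have := trace_fro (X * Rᴴ)
  rw [Matrix.conjTranspose_mul, Matrix.conjTranspose_conjTranspose,
    show R * Xᴴ * (X * Rᴴ) = R * ((Xᴴ * X) * Rᴴ) by simp [Matrix.mul_assoc],
    Matrix.trace_mul_comm, Matrix.mul_assoc, mul_eq_one_comm.mp hR, Matrix.mul_one,
    trace_fro] at this
  exact_mod_cast this.symm

lemma fro_mul_isometry_le {α β γ : Type*} [Fintype α] [Fintype β] [Fintype γ]
    [DecidableEq β] [DecidableEq γ] (C : Matrix α β ℂ) (Q : Matrix β γ ℂ) (hQ : Qᴴ * Q = 1) :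
    fro (C * Q) ≤ fro C := by
  set P : Matrix β β ℂ := Q * Qᴴ with hP
  have hPP : P * P = P := by rw [hP, Matrix.mul_assoc, ← Matrix.mul_assoc Qᴴ, hQ]; simp
  have hPH : Pᴴ = P := by rw [hP, Matrix.conjTranspose_mul, Matrix.conjTranspose_conjTranspose]
  have h1P : (1 - P) * (1 - P) = 1 - P := by
    rw [Matrix.mul_sub, Matrix.sub_mul, Matrix.sub_mul, hPP]; simp only [Matrix.mul_one,
      Matrix.one_mul]; abel
  have key : (fro (C * Q) : ℂ) + (fro (C * (1 - P)) : ℂ) = (fro C : ℂ) := by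
    rw [← trace_fro, ← trace_fro, ← trace_fro]
    have e1 : (C * Q)ᴴ * (C * Q) = Qᴴ * ((Cᴴ * C) * Q) := by
      rw [Matrix.conjTranspose_mul]; simp [Matrix.mul_assoc]
    have e2 : (C * (1 - P))ᴴ * (C * (1 - P)) = (1 - P)ᴴ * ((Cᴴ * C) * (1 - P)) := by
      rw [Matrix.conjTranspose_mul]; simp [Matrix.mul_assoc]
    rw [e1, e2, Matrix.trace_mul_comm (Qᴴ), Matrix.trace_mul_comm ((1 - P)ᴴ),
      Matrix.mul_assoc (Cᴴ * C), Matrix.mul_assoc (Cᴴ * C)]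
    have : (1 - P) * (1 - P)ᴴ = 1 - P := by
      rw [Matrix.conjTranspose_sub, Matrix.conjTranspose_one, hPH, h1P]
    rw [this, ← hP, ← Matrix.trace_add, ← Matrix.mul_add]
    simp
  have key' : fro (C * Q) + fro (C * (1 - P)) = fro C := by exact_mod_cast key
  linarith [fro_nonneg (C * (1 - P))]

/-! ### mode3 lemmas -/

lemma mode3_mode3 {ι α β : Type*} [Fintype ι] (A : ι → Matrix α β ℂ)
    (M N : Matrix ι ι ℂ) : mode3 (mode3 A M) N = mode3 A (N * M) := by
  funext i
  simp only [mode3, Finset.smul_sum, smul_smul, Matrix.mul_apply, Finset.sum_smul]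
  exact Finset.sum_comm

lemma mode3_one {ι α β : Type*} [Fintype ι] [DecidableEq ι] (A : ι → Matrix α β ℂ) :
    mode3 A (1 : Matrix ι ι ℂ) = A := by
  funext i
  simp [mode3, Matrix.one_apply, Finset.sum_ite_eq]

lemma mode3_sub {ι α β : Type*} [Fintype ι] (A B : ι → Matrix α β ℂ) (M : Matrix ι ι ℂ) :
    mode3 (fun i => A i - B i) M = fun i => mode3 A M i - mode3 B M i := by
  funext i
  simp [mode3, smul_sub, Finset.sum_sub_distrib]

lemma mode3_entry {ι α β : Type*} [Fintype ι] (X : ι → Matrix α β ℂ) (M : Matrix ι ι ℂ)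
    (i : ι) (a : α) (b : β) : mode3 X M i a b = M.mulVec (fun j => X j a b) i := by
  simp only [mode3, Matrix.mulVec, dotProduct, Matrix.sum_apply,
    Matrix.smul_apply, smul_eq_mul]

lemma mulVec_norm_sq {α β : Type*} [Fintype α] [Fintype β] [DecidableEq β]
    (Q : Matrix α β ℂ) (hQ : Qᴴ * Q = 1) (v : β → ℂ) :
    ∑ a, ‖Q.mulVec v a‖ ^ 2 = ∑ b, ‖v b‖ ^ 2 := by
  have := fro_unitary_left Q hQ (Matrix.of fun b (_ : Fin 1) => v b)
  simpa [fro, Matrix.mul_apply, Matrix.mulVec, dotProduct] using this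

lemma mode3_norm_entry {ι α β : Type*} [Fintype ι] [DecidableEq ι]
    (W : Matrix ι ι ℂ) (hW : Wᴴ * W = 1) (c : ℂ)
    (X : ι → Matrix α β ℂ) (a : α) (b : β) :
    ∑ i, ‖mode3 X (c • W) i a b‖ ^ 2 = ‖c‖ ^ 2 * ∑ j, ‖X j a b‖ ^ 2 := by
  have h1 : ∀ i, mode3 X (c • W) i a b = c * W.mulVec (fun j => X j a b) i := by
    intro i
    rw [mode3_entry, Matrix.smul_mulVec]
    rfl
  simp only [h1, norm_mul, mul_pow, ← Finset.mul_sum]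
  rw [mulVec_norm_sq W hW]

lemma mode3_fro_sum {ι α β : Type*} [Fintype ι] [DecidableEq ι] [Fintype α] [Fintype β]
    (W : Matrix ι ι ℂ) (hW : Wᴴ * W = 1) (c : ℂ) (X : ι → Matrix α β ℂ) :
    ∑ i, fro (mode3 X (c • W) i) = ‖c‖ ^ 2 * ∑ i, fro (X i) := by
  unfold fro
  rw [Finset.sum_comm]
  rw [show ∑ i, ∑ a : α, ∑ b : β, ‖X i a b‖ ^ 2 = ∑ a : α, ∑ i, ∑ b : β, ‖X i a b‖ ^ 2 from
    Finset.sum_comm]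
  rw [Finset.mul_sum]
  refine Finset.sum_congr rfl fun a _ => ?_
  rw [Finset.sum_comm]
  rw [show ∑ i, ∑ b : β, ‖X i a b‖ ^ 2 = ∑ b : β, ∑ i, ‖X i a b‖ ^ 2 from Finset.sum_comm]
  rw [Finset.mul_sum]
  exact Finset.sum_congr rfl fun b _ => mode3_norm_entry W hW c X a b

/-! ### counting and rearrangement -/

lemma card_ge_filter {p k : ℕ} :
    (∑ b : Fin p, if k ≤ (b : ℕ) then (1 : ℝ) else 0) = ((p - k : ℕ) : ℝ) := by
  rw [Fin.sum_univ_eq_sum_range (fun s => if k ≤ s then (1 : ℝ) else 0)]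
  rw [Finset.sum_boole]
  norm_num
  have : Finset.filter (fun s => k ≤ s) (Finset.range p) = Finset.Ico k p := by
    ext s
    simp [Finset.mem_Ico, Finset.mem_range, and_comm]
  rw [this, Nat.card_Ico]

lemma Q_diag_le_one {p q : ℕ} (Q : Matrix (Fin p) (Fin q) ℂ) (hQ : Qᴴ * Q = 1) (b : Fin p) :
    ∑ i, ‖Q b i‖ ^ 2 ≤ 1 := by
  set P : Matrix (Fin p) (Fin p) ℂ := Q * Qᴴ with hPdef
  set t : ℝ := ∑ i, ‖Q b i‖ ^ 2 with ht
  have hPb : P b b = (t : ℂ) := by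
    rw [hPdef, Matrix.mul_apply]
    push_cast [ht]
    refine Finset.sum_congr rfl fun i _ => ?_
    rw [Matrix.conjTranspose_apply]
    exact_mod_cast (RCLike.mul_conj (Q b i))
  have hPP : P * P = P := by
    rw [hPdef, Matrix.mul_assoc, ← Matrix.mul_assoc Qᴴ, hQ]; simp
  have hPH : Pᴴ = P := by
    rw [hPdef, Matrix.conjTranspose_mul, Matrix.conjTranspose_conjTranspose]
  have key : t = ∑ c, ‖P b c‖ ^ 2 := by
    have h1 : P b b = ∑ c, P b c * (starRingEnd ℂ) (P b c) := by
      nth_rewrite 1 [← hPP]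
      rw [Matrix.mul_apply]
      refine Finset.sum_congr rfl fun c _ => ?_
      congr 1
      have := congrFun (congrFun hPH c) b
      rw [Matrix.conjTranspose_apply] at this
      rw [← this]
      rfl
    have h2 : P b b = ((∑ c, ‖P b c‖ ^ 2 : ℝ) : ℂ) := by
      rw [h1]; push_cast
      refine Finset.sum_congr rfl fun c _ => ?_
      exact_mod_cast (RCLike.mul_conj (P b c))
    rw [hPb] at h2
    exact_mod_cast h2
  have h3 : t ^ 2 ≤ t := by
    calc t ^ 2 = ‖P b b‖ ^ 2 := by
          rw [hPb, Complex.norm_real, Real.norm_eq_abs, sq_abs]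
    _ ≤ ∑ c, ‖P b c‖ ^ 2 := Finset.single_le_sum (f := fun c => ‖P b c‖ ^ 2)
        (fun c _ => by positivity) (Finset.mem_univ b)
    _ = t := key.symm
  have ht0 : 0 ≤ t := ht ▸ Finset.sum_nonneg (fun i _ => sq_nonneg ‖Q b i‖)
  nlinarith [h3, ht0]

lemma Q_sum_t {p q : ℕ} (Q : Matrix (Fin p) (Fin q) ℂ) (hQ : Qᴴ * Q = 1) :
    ∑ b, ∑ i, ‖Q b i‖ ^ 2 = (q : ℝ) := by
  have h1 : Matrix.trace (Qᴴ * Q) = ((∑ b, ∑ i, ‖Q b i‖ ^ 2 : ℝ) : ℂ) := by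
    simp only [Matrix.trace, Matrix.diag, Matrix.mul_apply, Matrix.conjTranspose_apply]
    rw [Finset.sum_comm]
    push_cast
    refine Finset.sum_congr rfl fun b _ => Finset.sum_congr rfl fun i _ => ?_
    exact_mod_cast RCLike.conj_mul (Q b i)
  rw [hQ, Matrix.trace_one] at h1
  have := h1.symm
  rw [Fintype.card_fin] at this
  exact_mod_cast this

lemma rearr {p k : ℕ} (d t : Fin p → ℝ) (hd0 : ∀ b, 0 ≤ d b)
    (hmono : ∀ b b' : Fin p, (b : ℕ) ≤ (b' : ℕ) → d b' ≤ d b)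
    (ht0 : ∀ b, 0 ≤ t b) (ht1 : ∀ b, t b ≤ 1)
    (hsum : ∑ b, t b = ((p - k : ℕ) : ℝ)) :
    (∑ b : Fin p, if k ≤ (b : ℕ) then d b else 0) ≤ ∑ b, d b * t b := by
  by_cases hkp : k < p
  · set K : Fin p := ⟨k, hkp⟩ with hK
    have step : ∀ b : Fin p,
        (if k ≤ (b : ℕ) then d K * (t b - 1) else d K * t b) ≤
          d b * t b - (if k ≤ (b : ℕ) then d b else 0) := by
      intro b
      by_cases hb : k ≤ (b : ℕ)
      · simp only [hb, if_pos]
        have h1 : d b ≤ d K := hmono K b hb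
        have h2 : t b - 1 ≤ 0 := by linarith [ht1 b]
        nlinarith [h1, h2, hd0 b]
      · simp only [hb, if_neg, if_false]
        push_neg at hb
        have h1 : d K ≤ d b := hmono b K (by simp [hK]; omega)
        nlinarith [ht0 b]
    have hsum2 := Finset.sum_le_sum (fun b (_ : b ∈ Finset.univ) => step b)
    rw [Finset.sum_sub_distrib] at hsum2
    have hzero : (∑ b : Fin p, if k ≤ (b : ℕ) then d K * (t b - 1) else d K * t b) = 0 := by
      have : ∀ b : Fin p, (if k ≤ (b : ℕ) then d K * (t b - 1) else d K * t b)
          = d K * t b - d K * (if k ≤ (b : ℕ) then (1 : ℝ) else 0) := by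
        intro b; by_cases hb : k ≤ (b : ℕ) <;> simp [hb] <;> ring
      simp only [this]
      rw [Finset.sum_sub_distrib, ← Finset.mul_sum, ← Finset.mul_sum, hsum, card_ge_filter]
      ring
    rw [hzero] at hsum2
    linarith
  · have : ∀ b : Fin p, ¬ (k ≤ (b : ℕ)) := fun b => by omega
    simp only [this, if_false]
    rw [Finset.sum_const_zero]
    exact Finset.sum_nonneg fun b _ => mul_nonneg (hd0 b) (ht0 b)

/-! ### orthonormal basis of the kernel -/

lemma exists_Q {p k : ℕ} (Y : Matrix (Fin k) (Fin p) ℂ) :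
    ∃ Q : Matrix (Fin p) (Fin (p - k)) ℂ, Qᴴ * Q = 1 ∧ Y * Q = 0 := by
  let f : EuclideanSpace ℂ (Fin p) →ₗ[ℂ] (Fin k → ℂ) :=
    { toFun := fun v => Y.mulVec (fun j => v j)
      map_add' := by
        intro x y
        show Y.mulVec (fun j => (x + y) j) = Y.mulVec (fun j => x j) + Y.mulVec (fun j => y j)
        have : (fun j => (x + y) j) = (fun j => x j) + (fun j => y j) := by
          funext j; simp [PiLp.add_apply]
        rw [this, Matrix.mulVec_add]
      map_smul' := by
        intro c x
        show Y.mulVec (fun j => (c • x) j) = (RingHom.id ℂ) c • Y.mulVec (fun j => x j)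
        have : (fun j => (c • x) j) = c • (fun j => x j) := by
          funext j; simp [PiLp.smul_apply]
        rw [this, Matrix.mulVec_smul]
        rfl }
  have hrank : p - k ≤ Module.finrank ℂ (LinearMap.ker f) := by
    have h1 : Module.finrank ℂ (LinearMap.range f) + Module.finrank ℂ (LinearMap.ker f)
        = p := by
      rw [LinearMap.finrank_range_add_finrank_ker]
      simp [finrank_euclideanSpace]
    have h2 : Module.finrank ℂ (LinearMap.range f) ≤ k := by
      refine le_trans (Submodule.finrank_le _) ?_
      simp [Module.finrank_pi]
    omega
  let b := stdOrthonormalBasis ℂ (LinearMap.ker f)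
  let Q : Matrix (Fin p) (Fin (p - k)) ℂ :=
    Matrix.of fun r i => ((b (Fin.castLE hrank i)) : EuclideanSpace ℂ (Fin p)) r
  refine ⟨Q, ?_, ?_⟩
  · ext i i'
    have horth := orthonormal_iff_ite.mp b.orthonormal (Fin.castLE hrank i) (Fin.castLE hrank i')
    have hinner : (inner (𝕜 := ℂ) (b (Fin.castLE hrank i) : EuclideanSpace ℂ (Fin p))
        ((b (Fin.castLE hrank i')) : EuclideanSpace ℂ (Fin p)))
        = ∑ r, (starRingEnd ℂ) (Q r i) * Q r i' := by
      rw [PiLp.inner_apply]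
      simp [Q, RCLike.inner_apply]
      exact Finset.sum_congr rfl fun r _ => mul_comm _ _
    rw [Submodule.coe_inner] at horth
    rw [Matrix.mul_apply, Matrix.one_apply]
    simp only [Matrix.conjTranspose_apply, RCLike.star_def]
    rw [← hinner, horth]
    simp [Fin.castLE_inj]
  · ext a i
    have hker : (b (Fin.castLE hrank i) : EuclideanSpace ℂ (Fin p)) ∈ LinearMap.ker f :=
      (b (Fin.castLE hrank i)).2
    have := LinearMap.mem_ker.mp hker
    have hz : Y.mulVec (fun j => ((b (Fin.castLE hrank i)) : EuclideanSpace ℂ (Fin p)) j) = 0 :=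
      this
    rw [Matrix.mul_apply, Matrix.zero_apply]
    have := congrFun hz a
    simpa [Matrix.mulVec, dotProduct, Q] using this

end Aux
section Aux2

lemma sum_range_shrink {r m : ℕ} (hrm : r ≤ m) (G : ℕ → ℝ) (hG : ∀ s, r ≤ s → G s = 0) :
    ∑ s ∈ Finset.range m, G s = ∑ s ∈ Finset.range r, G s := by
  refine (Finset.sum_subset (Finset.range_subset_range.mpr hrm) ?_).symm
  intro s hs hs'
  exact hG s (by simpa using hs')

/-- squared diagonal entries, as a function on ℕ. -/
def dN {m p : ℕ} (Sd : Matrix (Fin m) (Fin p) ℂ) : ℕ → ℝ :=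
  fun s => if h : s < m ∧ s < p then ‖Sd ⟨s, h.1⟩ ⟨s, h.2⟩‖ ^ 2 else 0

lemma dN_nonneg {m p : ℕ} (Sd : Matrix (Fin m) (Fin p) ℂ) (s : ℕ) : 0 ≤ dN Sd s := by
  unfold dN; split <;> positivity

lemma dN_vanish {m p : ℕ} (Sd : Matrix (Fin m) (Fin p) ℂ) (s : ℕ) (hs : min m p ≤ s) :
    dN Sd s = 0 := by
  unfold dN
  rw [dif_neg]
  omega

lemma dN_mono {m p : ℕ} (Sd : Matrix (Fin m) (Fin p) ℂ)
    (hpos : ∀ (a : Fin m) (b : Fin p), (a : ℕ) = (b : ℕ) → ∃ r : ℝ, 0 ≤ r ∧ Sd a b = (r : ℂ))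
    (hmono : ∀ (a a' : Fin m) (b b' : Fin p), (a : ℕ) = (b : ℕ) → (a' : ℕ) = (b' : ℕ) →
      (a : ℕ) ≤ (a' : ℕ) → RCLike.re (Sd a' b') ≤ RCLike.re (Sd a b))
    (s s' : ℕ) (hss : s ≤ s') : dN Sd s' ≤ dN Sd s := by
  unfold dN
  by_cases h' : s' < m ∧ s' < p
  · have h : s < m ∧ s < p := ⟨lt_of_le_of_lt hss h'.1, lt_of_le_of_lt hss h'.2⟩
    rw [dif_pos h', dif_pos h]
    obtain ⟨r, hr0, hr⟩ := hpos ⟨s, h.1⟩ ⟨s, h.2⟩ rfl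
    obtain ⟨r', hr0', hr'⟩ := hpos ⟨s', h'.1⟩ ⟨s', h'.2⟩ rfl
    have := hmono ⟨s, h.1⟩ ⟨s', h'.1⟩ ⟨s, h.2⟩ ⟨s', h'.2⟩ rfl rfl hss
    rw [hr, hr'] at this ⊢
    simp only [RCLike.re_to_complex, Complex.ofReal_re] at this
    rw [Complex.norm_real, Complex.norm_real, Real.norm_eq_abs, Real.norm_eq_abs,
      abs_of_nonneg hr0, abs_of_nonneg hr0']
    nlinarith
  · rw [dif_neg h']
    exact dN_nonneg Sd s

lemma dN_eval {m p : ℕ} (Sh : Matrix (Fin m) (Fin p) ℂ) (s : ℕ) (h1 : s < m) (h2 : s < p) :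
    dN Sh s = ‖Sh ⟨s, h1⟩ ⟨s, h2⟩‖ ^ 2 := by
  unfold dN; rw [dif_pos ⟨h1, h2⟩]


/-- Core matrix lemma: lower bound on `fro (Sd - X * Y)` for diagonal `Sd`. -/
lemma core {m p k : ℕ} (Sd : Matrix (Fin m) (Fin p) ℂ)
    (hdiag : ∀ (a : Fin m) (b : Fin p), (a : ℕ) ≠ (b : ℕ) → Sd a b = 0)
    (hpos : ∀ (a : Fin m) (b : Fin p), (a : ℕ) = (b : ℕ) → ∃ r : ℝ, 0 ≤ r ∧ Sd a b = (r : ℂ))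
    (hmono : ∀ (a a' : Fin m) (b b' : Fin p), (a : ℕ) = (b : ℕ) → (a' : ℕ) = (b' : ℕ) →
      (a : ℕ) ≤ (a' : ℕ) → RCLike.re (Sd a' b') ≤ RCLike.re (Sd a b))
    (X : Matrix (Fin m) (Fin k) ℂ) (Y : Matrix (Fin k) (Fin p) ℂ) :
    (∑ s ∈ Finset.range (min m p), if k ≤ s then dN Sd s else 0) ≤ fro (Sd - X * Y) := by
  obtain ⟨Q, hQ1, hQ0⟩ := exists_Q Y
  have h1 : fro ((Sd - X * Y) * Q) ≤ fro (Sd - X * Y) := fro_mul_isometry_le _ Q hQ1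
  have h2 : (Sd - X * Y) * Q = Sd * Q := by
    rw [Matrix.sub_mul, Matrix.mul_assoc, hQ0, Matrix.mul_zero, sub_zero]
  set t : Fin p → ℝ := fun b => ∑ i, ‖Q b i‖ ^ 2 with ht
  have hentry : ∀ (a : Fin m) (i : Fin (p - k)),
      (Sd * Q) a i = if h : (a : ℕ) < p then Sd a ⟨a, h⟩ * Q ⟨a, h⟩ i else 0 := by
    intro a i
    rw [Matrix.mul_apply]
    by_cases h : (a : ℕ) < p
    · rw [dif_pos h]
      refine Finset.sum_eq_single_of_mem ((⟨(a : ℕ), h⟩ : Fin p)) (Finset.mem_univ _) ?_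
      intro b _ hb
      rw [hdiag a b (fun hh => hb (Fin.ext hh.symm)), zero_mul]
    · rw [dif_neg h]
      refine Finset.sum_eq_zero fun b _ => ?_
      rw [hdiag a b (by omega), zero_mul]
  have h3 : fro (Sd * Q) = ∑ b : Fin p, dN Sd b * t b := by
    have lhs : fro (Sd * Q) = ∑ a : Fin m,
        (if h : (a : ℕ) < p then ‖Sd a ⟨a, h⟩‖ ^ 2 * t ⟨a, h⟩ else 0) := by
      unfold fro
      refine Finset.sum_congr rfl fun a _ => ?_
      by_cases h : (a : ℕ) < p
      · rw [dif_pos h, ht, Finset.mul_sum]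
        refine Finset.sum_congr rfl fun i _ => ?_
        rw [hentry a i, dif_pos h, norm_mul, mul_pow]
      · rw [dif_neg h]
        refine Finset.sum_eq_zero fun i _ => ?_
        rw [hentry a i, dif_neg h, norm_zero]
        norm_num
    let G : ℕ → ℝ := fun s => if h : s < p then dN Sd s * t ⟨s, h⟩ else 0
    have hGdef : ∀ s, G s = if h : s < p then dN Sd s * t ⟨s, h⟩ else 0 := fun s => rfl
    have hGv : ∀ s, min m p ≤ s → G s = 0 := by
      intro s hs
      rw [hGdef]
      by_cases h : s < p
      · simp only [dif_pos h]
        rw [dN_vanish Sd s hs, zero_mul]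
      · simp [h]
    have lhs2 : (∑ a : Fin m, (if h : (a : ℕ) < p then ‖Sd a ⟨a, h⟩‖ ^ 2 * t ⟨a, h⟩ else 0))
        = ∑ s ∈ Finset.range m, G s := by
      rw [← Fin.sum_univ_eq_sum_range G]
      refine Finset.sum_congr rfl fun a _ => ?_
      rw [hGdef]
      by_cases h : (a : ℕ) < p
      · rw [dif_pos h, dif_pos h]
        congr 1
        unfold dN
        rw [dif_pos ⟨a.2, h⟩]
      · rw [dif_neg h, dif_neg h]
    have rhs2 : (∑ b : Fin p, dN Sd b * t b) = ∑ s ∈ Finset.range p, G s := by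
      rw [← Fin.sum_univ_eq_sum_range G]
      refine Finset.sum_congr rfl fun b _ => ?_
      rw [hGdef]
      simp only [dif_pos b.2, Fin.eta]
    rw [lhs, lhs2, rhs2, sum_range_shrink (Nat.min_le_left m p) G hGv,
      sum_range_shrink (Nat.min_le_right m p) G hGv]
  have h4 : (∑ b : Fin p, if k ≤ (b : ℕ) then dN Sd b else 0) ≤ ∑ b : Fin p, dN Sd b * t b := by
    refine rearr _ _ (fun b => dN_nonneg Sd b) (fun b b' hbb => dN_mono Sd hpos hmono _ _ hbb)
      (fun b => Finset.sum_nonneg fun i _ => by positivity) (fun b => Q_diag_le_one Q hQ1 b) ?_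
    exact Q_sum_t Q hQ1
  have h5 : (∑ s ∈ Finset.range (min m p), if k ≤ s then dN Sd s else 0)
      = ∑ b : Fin p, if k ≤ (b : ℕ) then dN Sd b else 0 := by
    rw [Fin.sum_univ_eq_sum_range (fun s => if k ≤ s then dN Sd s else 0) p]
    refine (sum_range_shrink (Nat.min_le_right m p) _ ?_).symm
    intro s hs
    by_cases h : k ≤ s
    · rw [if_pos h, dN_vanish Sd s hs]
    · rw [if_neg h]
  rw [h5]
  calc (∑ b : Fin p, if k ≤ (b : ℕ) then dN Sd b else 0)
      ≤ ∑ b : Fin p, dN Sd b * t b := h4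
    _ = fro (Sd * Q) := h3.symm
    _ = fro ((Sd - X * Y) * Q) := by rw [h2]
    _ ≤ fro (Sd - X * Y) := h1

end Aux2
section Aux3

lemma hat_hat {ι α β : Type*} [Fintype ι] [DecidableEq ι] (M : Matrix ι ι ℂ)
    (hMr : M * M⁻¹ = 1) (X : ι → Matrix α β ℂ) : mode3 (mode3 X M⁻¹) M = X := by
  rw [mode3_mode3, hMr, mode3_one]

lemma hat_tprod {ι m' p' q' : Type*} [Fintype ι] [DecidableEq ι] [Fintype p']
    (M : Matrix ι ι ℂ) (hMr : M * M⁻¹ = 1) (A : ι → Matrix m' p' ℂ) (B : ι → Matrix p' q' ℂ)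
    (i : ι) : mode3 (tprodM M A B) M i = mode3 A M i * mode3 B M i :=
  congrFun (hat_hat M hMr _) i

lemma hat_tconj {ι m' p' : Type*} [Fintype ι] [DecidableEq ι]
    (M : Matrix ι ι ℂ) (hMr : M * M⁻¹ = 1) (A : ι → Matrix m' p' ℂ)
    (i : ι) : mode3 (tconj M A) M i = (mode3 A M i)ᴴ :=
  congrFun (hat_hat M hMr _) i

lemma hat_tId {ι m' : Type*} [Fintype ι] [DecidableEq ι] [Fintype m'] [DecidableEq m']
    (M : Matrix ι ι ℂ) (hMr : M * M⁻¹ = 1)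
    (i : ι) : mode3 (tId m' M) M i = 1 :=
  congrFun (hat_hat M hMr _) i

lemma tUnitary_slices {ι m' : Type*} [Fintype ι] [DecidableEq ι] [Fintype m'] [DecidableEq m']
    (M : Matrix ι ι ℂ) (hMr : M * M⁻¹ = 1) (Q : ι → Matrix m' m' ℂ) (hQ : tUnitary M Q) :
    ∀ i, (mode3 Q M i)ᴴ * mode3 Q M i = 1 ∧ mode3 Q M i * (mode3 Q M i)ᴴ = 1 := by
  intro i
  constructor
  · have h1 : mode3 (tprodM M (tconj M Q) Q) M i = mode3 (tId m' M) M i := by rw [hQ.1]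
    rw [hat_tprod M hMr _ _ i, hat_tconj M hMr _ i, hat_tId M hMr i] at h1
    exact h1
  · have h1 : mode3 (tprodM M Q (tconj M Q)) M i = mode3 (tId m' M) M i := by rw [hQ.2]
    rw [hat_tprod M hMr _ _ i, hat_tconj M hMr _ i, hat_tId M hMr i] at h1
    exact h1

lemma trunc_diff {m p : ℕ} (k : ℕ) (Uh : Matrix (Fin m) (Fin m) ℂ)
    (Sh : Matrix (Fin m) (Fin p) ℂ) (Vh : Matrix (Fin p) (Fin p) ℂ) :
    Uh * Sh * Vhᴴ - truncSlice k Uh Sh Vh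
      = Uh * (Matrix.of fun (j : Fin m) (l : Fin p) =>
          if (j : ℕ) < k ∧ (l : ℕ) < k then 0 else Sh j l) * Vhᴴ := by
  ext a b
  simp only [Matrix.sub_apply, Matrix.mul_apply, Matrix.conjTranspose_apply, truncSlice,
    Matrix.of_apply, Finset.sum_mul]
  have hcomm : (∑ j : Fin m, ∑ l : Fin p,
        if (j : ℕ) < k ∧ (l : ℕ) < k then Uh a j * Sh j l * star (Vh b l) else 0)
      = ∑ l : Fin p, ∑ j : Fin m,
        if (j : ℕ) < k ∧ (l : ℕ) < k then Uh a j * Sh j l * star (Vh b l) else 0 :=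
    Finset.sum_comm
  rw [hcomm, ← Finset.sum_sub_distrib]
  refine Finset.sum_congr rfl fun l0 _ => ?_
  rw [← Finset.sum_sub_distrib]
  refine Finset.sum_congr rfl fun j0 _ => ?_
  by_cases hc : (j0 : ℕ) < k ∧ (l0 : ℕ) < k
  · rw [if_pos hc, if_pos hc]
    ring
  · rw [if_neg hc, if_neg hc]
    ring

lemma fro_scut {m p : ℕ} (k : ℕ) (Sh : Matrix (Fin m) (Fin p) ℂ)
    (hdiag : ∀ (a : Fin m) (b : Fin p), (a : ℕ) ≠ (b : ℕ) → Sh a b = 0) :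
    fro (Matrix.of fun (j : Fin m) (l : Fin p) =>
        if (j : ℕ) < k ∧ (l : ℕ) < k then 0 else Sh j l)
      = ∑ s ∈ Finset.range (min m p), if k ≤ s then dN Sh s else 0 := by
  set Scut : Matrix (Fin m) (Fin p) ℂ := Matrix.of fun (j : Fin m) (l : Fin p) =>
    if (j : ℕ) < k ∧ (l : ℕ) < k then 0 else Sh j l with hScut
  have hrow : ∀ a : Fin m, ∑ b, ‖Scut a b‖ ^ 2
      = if h : (a : ℕ) < p then (if k ≤ (a : ℕ) then ‖Sh a ⟨a, h⟩‖ ^ 2 else 0) else 0 := by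
    intro a
    by_cases h : (a : ℕ) < p
    · rw [dif_pos h]
      refine Finset.sum_eq_single_of_mem ((⟨(a : ℕ), h⟩ : Fin p)) (Finset.mem_univ _) ?_ |>.trans ?_
      · intro b _ hb
        have hne : (a : ℕ) ≠ (b : ℕ) := fun hh => hb (Fin.ext hh.symm)
        have : Scut a b = 0 := by
          rw [hScut]
          simp only [Matrix.of_apply]
          rw [hdiag a b hne]
          split <;> rfl
        rw [this, norm_zero]
        norm_num
      · have : Scut a ⟨(a : ℕ), h⟩ = if k ≤ (a : ℕ) then Sh a ⟨(a : ℕ), h⟩ else 0 := by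
          rw [hScut]
          simp only [Matrix.of_apply]
          by_cases hka : k ≤ (a : ℕ)
          · rw [if_pos hka, if_neg (by omega)]
          · rw [if_neg hka, if_pos (by omega)]
        rw [this]
        by_cases hka : k ≤ (a : ℕ)
        · rw [if_pos hka, if_pos hka]
        · rw [if_neg hka, if_neg hka, norm_zero]
          norm_num
    · rw [dif_neg h]
      refine Finset.sum_eq_zero fun b _ => ?_
      have : Scut a b = 0 := by
        rw [hScut]
        simp only [Matrix.of_apply]
        rw [hdiag a b (by omega)]
        split <;> rfl
      rw [this, norm_zero]
      norm_num
  let G : ℕ → ℝ := fun s => if k ≤ s then dN Sh s else 0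
  have hGdef : ∀ s, G s = if k ≤ s then dN Sh s else 0 := fun _ => rfl
  have hGv : ∀ s, min m p ≤ s → G s = 0 := by
    intro s hs
    rw [hGdef]
    by_cases h : k ≤ s
    · rw [if_pos h, dN_vanish Sh s hs]
    · rw [if_neg h]
  have step1 : fro Scut = ∑ s ∈ Finset.range m, G s := by
    unfold fro
    rw [← Fin.sum_univ_eq_sum_range G]
    refine Finset.sum_congr rfl fun a _ => ?_
    rw [hrow a, hGdef]
    by_cases h : (a : ℕ) < p
    · rw [dif_pos h]
      by_cases hka : k ≤ (a : ℕ)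
      · rw [if_pos hka, if_pos hka]
        unfold dN
        rw [dif_pos ⟨a.2, h⟩]
      · rw [if_neg hka, if_neg hka]
    · rw [dif_neg h]
      have : dN Sh (a : ℕ) = 0 := by unfold dN; rw [dif_neg (by omega)]
      rw [this]
      split <;> rfl
  rw [step1, sum_range_shrink (Nat.min_le_left m p) G hGv]

lemma slice_eq {m p : ℕ} (k : ℕ) (Uh : Matrix (Fin m) (Fin m) ℂ)
    (Sh : Matrix (Fin m) (Fin p) ℂ) (Vh : Matrix (Fin p) (Fin p) ℂ)
    (hU1 : Uhᴴ * Uh = 1) (hV2 : Vh * Vhᴴ = 1)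
    (hdiag : ∀ (a : Fin m) (b : Fin p), (a : ℕ) ≠ (b : ℕ) → Sh a b = 0) :
    fro (Uh * Sh * Vhᴴ - truncSlice k Uh Sh Vh)
      = ∑ s ∈ Finset.range (min m p), if k ≤ s then dN Sh s else 0 := by
  rw [trunc_diff k Uh Sh Vh, Matrix.mul_assoc, fro_unitary_left Uh hU1,
    fro_unitary_right Vh hV2, fro_scut k Sh hdiag]

lemma slice_le {m p k' : ℕ} (Uh : Matrix (Fin m) (Fin m) ℂ)
    (Sh : Matrix (Fin m) (Fin p) ℂ) (Vh : Matrix (Fin p) (Fin p) ℂ)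
    (hU1 : Uhᴴ * Uh = 1) (hU2 : Uh * Uhᴴ = 1) (hV2 : Vh * Vhᴴ = 1)
    (hdiag : ∀ (a : Fin m) (b : Fin p), (a : ℕ) ≠ (b : ℕ) → Sh a b = 0)
    (hpos : ∀ (a : Fin m) (b : Fin p), (a : ℕ) = (b : ℕ) → ∃ r : ℝ, 0 ≤ r ∧ Sh a b = (r : ℂ))
    (hmono : ∀ (a a' : Fin m) (b b' : Fin p), (a : ℕ) = (b : ℕ) → (a' : ℕ) = (b' : ℕ) →
      (a : ℕ) ≤ (a' : ℕ) → RCLike.re (Sh a' b') ≤ RCLike.re (Sh a b))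
    (XB : Matrix (Fin m) (Fin k') ℂ) (YB : Matrix (Fin k') (Fin p) ℂ) :
    (∑ s ∈ Finset.range (min m p), if k' ≤ s then dN Sh s else 0)
      ≤ fro (Uh * Sh * Vhᴴ - XB * YB) := by
  have hfact : Uh * Sh * Vhᴴ - XB * YB
      = Uh * (Sh - (Uhᴴ * XB) * (YB * Vh)) * Vhᴴ := by
    rw [Matrix.mul_sub, Matrix.sub_mul]
    congr 1
    simp only [← Matrix.mul_assoc]
    rw [hU2, Matrix.one_mul, Matrix.mul_assoc (XB * YB), hV2, Matrix.mul_one]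
  rw [hfact, Matrix.mul_assoc, fro_unitary_left Uh hU1, fro_unitary_right Vh hV2]
  exact core Sh hdiag hpos hmono (Uhᴴ * XB) (YB * Vh)

end Aux3

/-- Eckart–Young for the t-SVDM: the t-rank-k truncation `A_k` satisfies
`‖A − A_k‖² = ∑_{i>k} ∑_j |(S j) i i|²` and is optimal among all products `X ⋆_M Y`
with inner tensor dimension `k`. -/
theorem stmt5 {n m p : ℕ}
    (W : Matrix (Fin n) (Fin n) ℂ) (hW : W ∈ Matrix.unitaryGroup (Fin n) ℂ)
    (c : ℂ) (hc : c ≠ 0)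
    (A : Fin n → Matrix (Fin m) (Fin p) ℂ)
    (U : Fin n → Matrix (Fin m) (Fin m) ℂ)
    (S : Fin n → Matrix (Fin m) (Fin p) ℂ)
    (V : Fin n → Matrix (Fin p) (Fin p) ℂ)
    (h : IsTSVDM (c • W) A U S V)
    (k : ℕ) (hk : k ≤ min m p) :
    (tnorm (fun i => A i - truncTensor (c • W) U S V (fun _ => k) i) ^ 2 =
      ∑ i : Fin (min m p),
        if k ≤ (i : ℕ) then
          (∑ j : Fin n,
            ‖S j (Fin.castLE (min_le_left m p) i) (Fin.castLE (min_le_right m p) i)‖ ^ 2)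
        else 0) ∧
    ∀ (X : Fin n → Matrix (Fin m) (Fin k) ℂ) (Y : Fin n → Matrix (Fin k) (Fin p) ℂ),
      tnorm (fun i => A i - truncTensor (c • W) U S V (fun _ => k) i) ≤
        tnorm (fun i => A i - tprodM (c • W) X Y i) := by
  obtain ⟨hA, hUu, hVu, hdiag, hpos, hmono⟩ := h
  have hWl : Wᴴ * W = 1 := by
    have := Matrix.mem_unitaryGroup_iff'.mp hW
    simpa [Matrix.star_eq_conjTranspose] using this
  have hWr : W * Wᴴ = 1 := by
    have := Matrix.mem_unitaryGroup_iff.mp hW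
    simpa [Matrix.star_eq_conjTranspose] using this
  have hdetW : W.det ≠ 0 := by
    intro h0
    have := congrArg Matrix.det hWr
    rw [Matrix.det_mul, Matrix.det_one, h0, zero_mul] at this
    exact zero_ne_one this
  have hdet : IsUnit (c • W).det := by
    rw [Matrix.det_smul]
    exact isUnit_iff_ne_zero.mpr (mul_ne_zero (pow_ne_zero _ hc) hdetW)
  have hMr : (c • W) * (c • W)⁻¹ = 1 := Matrix.mul_nonsing_inv _ hdet
  have hceq : ‖c‖ ^ 2 ≠ 0 := pow_ne_zero 2 (norm_ne_zero_iff.mpr hc)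
  have hcpos : (0 : ℝ) < ‖c‖ ^ 2 := pow_pos (norm_pos_iff.mpr hc) 2
  have hAhat : ∀ i, mode3 A (c • W) i
      = mode3 U (c • W) i * mode3 S (c • W) i * (mode3 V (c • W) i)ᴴ := by
    intro i
    rw [hA, hat_tprod _ hMr _ _ i, hat_tprod _ hMr _ _ i, hat_tconj _ hMr _ i]
  have hThat : ∀ i, mode3 (truncTensor (c • W) U S V (fun _ => k)) (c • W) i
      = truncSlice k (mode3 U (c • W) i) (mode3 S (c • W) i) (mode3 V (c • W) i) :=
    fun i => congrFun (hat_hat _ hMr _) i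
  have hUsl := tUnitary_slices _ hMr U hUu
  have hVsl := tUnitary_slices _ hMr V hVu
  have hpos' : ∀ (i : Fin n) (a : Fin m) (b : Fin p), (a : ℕ) = (b : ℕ) →
      ∃ r : ℝ, 0 ≤ r ∧ mode3 S (c • W) i a b = (r : ℂ) := by
    intro i a b hab
    obtain ⟨r, hr0, hr⟩ := hpos i a b hab
    exact ⟨r, hr0, hr⟩
  have hsliceeq : ∀ i, fro (mode3 A (c • W) i
        - mode3 (truncTensor (c • W) U S V fun _ => k) (c • W) i)
      = ∑ s ∈ Finset.range (min m p), if k ≤ s then dN (mode3 S (c • W) i) s else 0 := by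
    intro i
    rw [hAhat i, hThat i]
    exact slice_eq k _ _ _ (hUsl i).1 (hVsl i).2 (hdiag i)
  have hsumT : ‖c‖ ^ 2 * (∑ i, fro (A i - truncTensor (c • W) U S V (fun _ => k) i))
      = ∑ i, ∑ s ∈ Finset.range (min m p),
          (if k ≤ s then dN (mode3 S (c • W) i) s else 0) := by
    rw [← mode3_fro_sum W hWl c (fun i => A i - truncTensor (c • W) U S V (fun _ => k) i)]
    refine Finset.sum_congr rfl fun i _ => ?_
    rw [show mode3 (fun i => A i - truncTensor (c • W) U S V (fun _ => k) i) (c • W) i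
        = mode3 A (c • W) i - mode3 (truncTensor (c • W) U S V fun _ => k) (c • W) i from
        congrFun (mode3_sub _ _ _) i]
    exact hsliceeq i
  have hRHS : ‖c‖ ^ 2 * (∑ i : Fin (min m p),
        if k ≤ (i : ℕ) then
          (∑ j : Fin n,
            ‖S j (Fin.castLE (min_le_left m p) i) (Fin.castLE (min_le_right m p) i)‖ ^ 2)
        else 0)
      = ∑ j, ∑ s ∈ Finset.range (min m p),
          (if k ≤ s then dN (mode3 S (c • W) j) s else 0) := by
    rw [Finset.mul_sum]
    have hterm : ∀ dd : Fin (min m p), ‖c‖ ^ 2 * (if k ≤ (dd : ℕ) then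
          (∑ j : Fin n, ‖S j (Fin.castLE (min_le_left m p) dd)
            (Fin.castLE (min_le_right m p) dd)‖ ^ 2) else 0)
        = ∑ j : Fin n, (if k ≤ (dd : ℕ) then
            ‖mode3 S (c • W) j (Fin.castLE (min_le_left m p) dd)
              (Fin.castLE (min_le_right m p) dd)‖ ^ 2 else 0) := by
      intro dd
      by_cases hkd : k ≤ (dd : ℕ)
      · rw [if_pos hkd, ← mode3_norm_entry W hWl c S (Fin.castLE (min_le_left m p) dd)
          (Fin.castLE (min_le_right m p) dd)]
        exact Finset.sum_congr rfl fun j _ => (if_pos hkd).symm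
      · rw [if_neg hkd, mul_zero]
        exact (Finset.sum_eq_zero fun j _ => if_neg hkd).symm
    calc (∑ dd : Fin (min m p), ‖c‖ ^ 2 * (if k ≤ (dd : ℕ) then
          (∑ j : Fin n, ‖S j (Fin.castLE (min_le_left m p) dd)
            (Fin.castLE (min_le_right m p) dd)‖ ^ 2) else 0))
        = ∑ dd : Fin (min m p), ∑ j : Fin n, (if k ≤ (dd : ℕ) then
            ‖mode3 S (c • W) j (Fin.castLE (min_le_left m p) dd)
              (Fin.castLE (min_le_right m p) dd)‖ ^ 2 else 0) :=
          Finset.sum_congr rfl fun dd _ => hterm dd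
      _ = ∑ j : Fin n, ∑ dd : Fin (min m p), (if k ≤ (dd : ℕ) then
            ‖mode3 S (c • W) j (Fin.castLE (min_le_left m p) dd)
              (Fin.castLE (min_le_right m p) dd)‖ ^ 2 else 0) := Finset.sum_comm
      _ = ∑ j, ∑ s ∈ Finset.range (min m p),
            (if k ≤ s then dN (mode3 S (c • W) j) s else 0) := by
          refine Finset.sum_congr rfl fun j _ => ?_
          rw [← Fin.sum_univ_eq_sum_range (fun s => if k ≤ s then dN (mode3 S (c • W) j) s
            else 0) (min m p)]
          refine Finset.sum_congr rfl fun dd _ => ?_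
          by_cases hkd : k ≤ (dd : ℕ)
          · rw [if_pos hkd, if_pos hkd, dN_eval (mode3 S (c • W) j) (dd : ℕ)
              (lt_of_lt_of_le dd.2 (min_le_left m p)) (lt_of_lt_of_le dd.2 (min_le_right m p))]
            rfl
          · rw [if_neg hkd, if_neg hkd]
  have e0 : tnorm (fun i => A i - truncTensor (c • W) U S V (fun _ => k) i) ^ 2
      = ∑ i, fro (A i - truncTensor (c • W) U S V (fun _ => k) i) := by
    rw [tnorm_sq]
  constructor
  · refine mul_left_cancel₀ hceq ?_
    rw [e0, hsumT, hRHS]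
  · intro X Y
    have hXle : ∀ i, (∑ s ∈ Finset.range (min m p),
          if k ≤ s then dN (mode3 S (c • W) i) s else 0)
        ≤ fro (mode3 A (c • W) i - mode3 (tprodM (c • W) X Y) (c • W) i) := by
      intro i
      rw [hAhat i, hat_tprod _ hMr X Y i]
      exact slice_le _ _ _ (hUsl i).1 (hUsl i).2 (hVsl i).2 (hdiag i) (hpos' i) (hmono i) _ _
    have hsumXY : ‖c‖ ^ 2 * (∑ i, fro (A i - tprodM (c • W) X Y i))
        = ∑ i, fro (mode3 A (c • W) i - mode3 (tprodM (c • W) X Y) (c • W) i) := by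
      rw [← mode3_fro_sum W hWl c (fun i => A i - tprodM (c • W) X Y i)]
      refine Finset.sum_congr rfl fun i _ => ?_
      rw [show mode3 (fun i => A i - tprodM (c • W) X Y i) (c • W) i
          = mode3 A (c • W) i - mode3 (tprodM (c • W) X Y) (c • W) i from
          congrFun (mode3_sub _ _ _) i]
    have hle3 : ‖c‖ ^ 2 * (∑ i, fro (A i - truncTensor (c • W) U S V (fun _ => k) i))
        ≤ ‖c‖ ^ 2 * (∑ i, fro (A i - tprodM (c • W) X Y i)) := by
      rw [hsumT, hsumXY]
      exact Finset.sum_le_sum fun i _ => hXle i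
    have hle4 : (∑ i, fro (A i - truncTensor (c • W) U S V (fun _ => k) i))
        ≤ ∑ i, fro (A i - tprodM (c • W) X Y i) :=
      (mul_le_mul_iff_right₀ hcpos).mp hle3
    rw [tnorm_eq_sqrt, tnorm_eq_sqrt]
    exact Real.sqrt_le_sqrt hle4
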